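/- Let K be a field, n ≥ 2 an integer, R = K[x_1,…,x_n], and let J(K_n) = ⋂_{1 ≤ i < j ≤ n} (x_i, x_j) be the cover ideal of the complete graph K_n. Then the maximal graded ideal (x_1,…,x_n) belongs to Ass(R/J(K_n)^t) for every integer t ≥ n−1. -/

import Mathlib

open MvPolynomial

/-- The exponent vector of the `k`-th generator `∏_{i ≠ k} x_i` of the cover ideal of `K_n`. -/
noncomputable def CoverAux.mdeg (n : ℕ) (k : Fin n) : Fin n →₀ ℕ :=
  Finsupp.equivFunOnFinite.symm (fun i => if i = k then 0 else 1)

namespace CoverAux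

theorem mdeg_apply {n : ℕ} (k j : Fin n) : mdeg n k j = if j = k then 0 else 1 := by
  simp [mdeg]

/-- Degree vectors appearing in the `t`-th power of the cover ideal. -/
def Tset (n t : ℕ) : Set (Fin n →₀ ℕ) :=
  {d | ∃ c : Fin n → ℕ, (∑ k, c k) = t ∧ d = ∑ k, c k • mdeg n k}

theorem prod_pow_mem_pow {R : Type*} [CommRing R] (I : Ideal R) {ι : Type*} [DecidableEq ι]
    (s : Finset ι) (f : ι → R) (c : ι → ℕ) (h : ∀ k ∈ s, f k ∈ I) :
    (∏ k ∈ s, f k ^ c k) ∈ I ^ (∑ k ∈ s, c k) := by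
  induction s using Finset.induction with
  | empty => simp
  | @insert a s ha ih =>
    rw [Finset.prod_insert ha, Finset.sum_insert ha, pow_add]
    exact Ideal.mul_mem_mul (Ideal.pow_mem_pow (h _ (Finset.mem_insert_self _ _)) _)
      (ih fun k hk => h k (Finset.mem_insert_of_mem hk))

theorem prod_monomial {K : Type*} [CommSemiring K] {σ : Type*} {ι : Type*} [DecidableEq ι]
    (s : Finset ι) (d : ι → (σ →₀ ℕ)) :
    (∏ k ∈ s, (monomial (d k) (1 : K))) = monomial (∑ k ∈ s, d k) 1 := by
  induction s using Finset.induction with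
  | empty => simp
  | @insert a s ha ih =>
    rw [Finset.prod_insert ha, Finset.sum_insert ha, ih, monomial_mul, one_mul]

theorem ker_constantCoeff {K : Type*} [Field K] {n : ℕ} :
    RingHom.ker (constantCoeff : MvPolynomial (Fin n) K →+* K)
      = Ideal.span (Set.range (X : Fin n → MvPolynomial (Fin n) K)) := by
  ext f
  rw [← Set.image_univ, mem_ideal_span_X_image, RingHom.mem_ker]
  constructor
  · intro h0 d hd
    have hd0 : d ≠ 0 := by
      rintro rfl
      exact (mem_support_iff.mp hd) (by simpa [constantCoeff_eq] using h0)
    obtain ⟨i, hi⟩ := Finsupp.ne_iff.mp hd0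
    exact ⟨i, Set.mem_univ i, by simpa using hi⟩
  · intro h
    rw [constantCoeff_eq]
    by_contra h0
    obtain ⟨i, _, hi⟩ := h 0 (mem_support_iff.mpr h0)
    simp at hi

theorem span_range_X_isMaximal {K : Type*} [Field K] {n : ℕ} :
    (Ideal.span (Set.range (X : Fin n → MvPolynomial (Fin n) K))).IsMaximal := by
  rw [← ker_constantCoeff]
  exact RingHom.ker_isMaximal_of_surjective _ (fun a => ⟨C a, by simp⟩)

theorem span_pair_eq {K : Type*} [Field K] {n : ℕ} (i j : Fin n) :
    (Ideal.span {(X i : MvPolynomial (Fin n) K), X j})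
      = Ideal.span ((fun s => monomial s (1 : K)) ''
          {Finsupp.single i 1, Finsupp.single j 1}) := by
  rw [Set.image_pair]; rfl

theorem gen_mem_pair {K : Type*} [Field K] {n : ℕ} (k i j : Fin n) (hij : i ≠ j) :
    (monomial (mdeg n k) (1 : K)) ∈ Ideal.span {(X i : MvPolynomial (Fin n) K), X j} := by
  rw [span_pair_eq, mem_ideal_span_monomial_image]
  intro xi hxi
  rw [show ((monomial (mdeg n k)) (1:K)).support = {mdeg n k} by
      classical rw [support_monomial, if_neg one_ne_zero], Finset.mem_singleton] at hxi
  subst hxi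
  rcases eq_or_ne i k with rfl | hik
  · exact ⟨Finsupp.single j 1, by simp,
      Finsupp.single_le_iff.mpr (by simp [mdeg_apply, hij.symm])⟩
  · exact ⟨Finsupp.single i 1, by simp, Finsupp.single_le_iff.mpr (by simp [mdeg_apply, hik])⟩

theorem cover_le_monomial_span {K : Type*} [Field K] {n : ℕ} (hn : 2 ≤ n) :
    (⨅ (i : Fin n) (j : Fin n) (_ : i < j),
        Ideal.span {(X i : MvPolynomial (Fin n) K), X j})
      ≤ Ideal.span ((fun s => monomial s (1 : K)) '' Set.range (mdeg n)) := by
  intro f hf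
  simp only [Ideal.mem_iInf] at hf
  rw [mem_ideal_span_monomial_image]
  intro d hd
  have key : ∀ i j : Fin n, i < j → 1 ≤ d i ∨ 1 ≤ d j := by
    intro i j hij
    have := hf i j hij
    rw [span_pair_eq, mem_ideal_span_monomial_image] at this
    obtain ⟨si, hsi, hle⟩ := this d hd
    rcases hsi with rfl | rfl
    · exact Or.inl (Finsupp.single_le_iff.mp hle)
    · exact Or.inr (Finsupp.single_le_iff.mp hle)
  by_cases hall : ∀ k : Fin n, 1 ≤ d k
  · refine ⟨mdeg n ⟨0, by omega⟩, Set.mem_range_self _, ?_⟩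
    rw [Finsupp.le_def]
    intro i
    rw [mdeg_apply]
    split
    · exact Nat.zero_le _
    · exact hall i
  · push_neg at hall
    obtain ⟨k, hk⟩ := hall
    have hk0 : d k = 0 := by omega
    refine ⟨mdeg n k, Set.mem_range_self _, ?_⟩
    rw [Finsupp.le_def]
    intro i
    rw [mdeg_apply]
    split
    · exact Nat.zero_le _
    · next hik =>
      rcases lt_or_gt_of_ne hik with h | h
      · rcases key i k h with h1 | h1
        · exact h1
        · omega
      · rcases key k i h with h1 | h1
        · omega
        · exact h1

theorem pow_le_monomial_span {K : Type*} [Field K] {n : ℕ} (t : ℕ)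
    (J : Ideal (MvPolynomial (Fin n) K))
    (hJ : J ≤ Ideal.span ((fun s => monomial s (1 : K)) '' Set.range (mdeg n))) :
    J ^ t ≤ Ideal.span ((fun s => monomial s (1 : K)) '' Tset n t) := by
  induction t with
  | zero =>
    rw [pow_zero, Ideal.one_eq_top]
    intro f _
    have h1 : (1 : MvPolynomial (Fin n) K) ∈
        Ideal.span ((fun s => monomial s (1 : K)) '' Tset n 0) := by
      apply Ideal.subset_span
      refine ⟨0, ⟨fun _ => 0, by simp⟩, by simp⟩
    simpa using Ideal.mul_mem_left _ f h1
  | succ t ih =>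
    calc J ^ (t + 1) = J ^ t * J := by rw [pow_succ]
      _ ≤ Ideal.span ((fun s => monomial s (1 : K)) '' Tset n t) *
            Ideal.span ((fun s => monomial s (1 : K)) '' Set.range (mdeg n)) :=
          Ideal.mul_mono ih hJ
      _ ≤ Ideal.span ((fun s => monomial s (1 : K)) '' Tset n (t + 1)) := by
          rw [Ideal.span_mul_span']
          apply Ideal.span_le.mpr
          rintro x ⟨y, ⟨d, ⟨c, hc, rfl⟩, rfl⟩, z, ⟨e, ⟨k, rfl⟩, rfl⟩, rfl⟩
          apply Ideal.subset_span
          refine ⟨(∑ j, c j • mdeg n j) + mdeg n k,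
            ⟨fun j => c j + if j = k then 1 else 0, ?_, ?_⟩, ?_⟩
          · rw [Finset.sum_add_distrib, hc, Finset.sum_ite_eq' Finset.univ k fun _ => 1]
            simp
          · have : (∑ k_1 : Fin n, (c k_1 + if k_1 = k then 1 else 0) • mdeg n k_1)
                = ∑ j : Fin n, (c j • mdeg n j + (if j = k then 1 else 0) • mdeg n j) := by
              apply Finset.sum_congr rfl
              intro j _
              rw [add_smul]
            rw [this, Finset.sum_add_distrib]
            congr 1
            rw [show (∑ x : Fin n, (if x = k then 1 else 0) • mdeg n x)
                = ∑ x : Fin n, (if x = k then mdeg n x else 0) from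
              Finset.sum_congr rfl fun x _ => by split <;> simp,
              Finset.sum_ite_eq' Finset.univ k (mdeg n)]
            simp
          · simp [monomial_mul]

theorem key_arith (n t : ℕ) (hn : 2 ≤ n) (ht : n - 1 ≤ t) :
    n * t = t + ((n - 2) + (n - 1) * (t - 1) + 1) := by
  obtain ⟨n', rfl⟩ : ∃ n', n = n' + 2 := ⟨n - 2, by omega⟩
  obtain ⟨t', rfl⟩ : ∃ t', t = t' + 1 := ⟨t - 1, by omega⟩
  simp only [Nat.add_sub_cancel, show n' + 2 - 1 = n' + 1 from rfl]
  ring_nf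

theorem sum_smul_mdeg_apply {n : ℕ} (c : Fin n → ℕ) (j : Fin n) :
    (∑ k, c k • mdeg n k) j = ∑ k ∈ Finset.univ.erase j, c k := by
  classical
  rw [Finsupp.finset_sum_apply]
  rw [← Finset.add_sum_erase _ _ (Finset.mem_univ j)]
  rw [Finsupp.smul_apply, mdeg_apply, if_pos rfl, smul_zero, zero_add]
  apply Finset.sum_congr rfl
  intro k hk
  rw [Finsupp.smul_apply, mdeg_apply,
    if_neg (fun h => (Finset.ne_of_mem_erase hk) h.symm), smul_eq_mul, mul_one]

end CoverAux

theorem stmt_10 {K : Type*} [Field K] (n : ℕ) (hn : 2 ≤ n)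
    (t : ℕ) (ht : n - 1 ≤ t) :
    Ideal.span (Set.range (X : Fin n → MvPolynomial (Fin n) K)) ∈
      associatedPrimes (MvPolynomial (Fin n) K)
        ((MvPolynomial (Fin n) K) ⧸
          (⨅ (i : Fin n) (j : Fin n) (_ : i < j),
            Ideal.span {(X i : MvPolynomial (Fin n) K), X j}) ^ t) := by
  classical
  open CoverAux in
  set J : Ideal (MvPolynomial (Fin n) K) :=
    ⨅ (i : Fin n) (j : Fin n) (_ : i < j),
      Ideal.span {(X i : MvPolynomial (Fin n) K), X j} with hJdef
  have ht1 : 1 ≤ t := by omega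
  -- the distinguished vertex
  set z : Fin n := ⟨0, by omega⟩ with hz
  -- the witness exponent vector
  set a : Fin n →₀ ℕ :=
    Finsupp.equivFunOnFinite.symm (fun j => if j = z then n - 2 else t - 1) with ha
  have ha_apply : ∀ j : Fin n, a j = if j = z then n - 2 else t - 1 := by
    intro j; simp [ha]
  have ha_sum : (∑ j, a j) = (n - 2) + (n - 1) * (t - 1) := by
    rw [← Finset.add_sum_erase _ _ (Finset.mem_univ z), ha_apply, if_pos rfl]
    congr 1
    rw [Finset.sum_congr rfl (fun j hj => by
      rw [ha_apply, if_neg (Finset.ne_of_mem_erase hj)]),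
      Finset.sum_const, Finset.card_erase_of_mem (Finset.mem_univ z), Finset.card_univ,
      Fintype.card_fin, smul_eq_mul]
  set u : MvPolynomial (Fin n) K := monomial a 1 with hu
  -- generators of the cover ideal lie in J
  have hgen : ∀ k : Fin n, (monomial (CoverAux.mdeg n k) (1 : K)) ∈ J := by
    intro k
    rw [hJdef]
    simp only [Ideal.mem_iInf]
    intro i j hij
    exact CoverAux.gen_mem_pair k i j hij.ne
  -- (a) x_i * u ∈ J ^ t for all i
  have hmul : ∀ i : Fin n, (X i : MvPolynomial (Fin n) K) * u ∈ J ^ t := by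
    intro i
    set a' : Fin n → ℕ := fun j => a j + if j = i then 1 else 0 with ha'
    have ha'le : ∀ j, a' j ≤ t := by
      intro j
      rw [ha']
      simp only
      rw [ha_apply]
      rcases eq_or_ne j z with rfl | hjz
      · rw [if_pos rfl]; split <;> omega
      · rw [if_neg hjz]; split <;> omega
    set c : Fin n → ℕ := fun k => t - a' k with hc
    have hca' : ∀ k, c k + a' k = t := fun k => Nat.sub_add_cancel (ha'le k)
    have ha'sum : (∑ k, a' k) = (∑ k, a k) + 1 := by
      rw [ha', Finset.sum_add_distrib, Finset.sum_ite_eq' Finset.univ i fun _ => 1]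
      simp
    have hcsum : (∑ k, c k) = t := by
      have h1 : (∑ k, c k) + (∑ k, a' k) = n * t := by
        rw [← Finset.sum_add_distrib, Finset.sum_congr rfl fun k _ => hca' k]
        simp [Finset.card_univ, mul_comm]
      have h2 := CoverAux.key_arith n t hn ht
      rw [ha'sum, ha_sum] at h1
      omega
    -- the product of generators equals x_i * u
    have heq : (∏ k, (monomial (CoverAux.mdeg n k) (1 : K)) ^ c k)
        = (X i : MvPolynomial (Fin n) K) * u := by
      have h1 : ∀ k : Fin n, (monomial (CoverAux.mdeg n k) (1 : K)) ^ c k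
          = monomial (c k • CoverAux.mdeg n k) 1 := by
        intro k; rw [monomial_pow, one_pow]
      rw [Finset.prod_congr rfl fun k _ => h1 k, CoverAux.prod_monomial]
      rw [hu, show (X i : MvPolynomial (Fin n) K) = monomial (Finsupp.single i 1) 1 from rfl,
        monomial_mul, one_mul]
      have hvec : (∑ k, c k • CoverAux.mdeg n k) = Finsupp.single i 1 + a := by
        ext j
        rw [CoverAux.sum_smul_mdeg_apply]
        have h2 : (∑ k ∈ Finset.univ.erase j, c k) + c j = t := by
          rw [Finset.sum_erase_add _ _ (Finset.mem_univ j), hcsum]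
        have h3 := hca' j
        have h4 : ((Finsupp.single i 1 + a : Fin n →₀ ℕ)) j = a' j := by
          rw [Finsupp.add_apply, ha']
          simp only [Finsupp.single_apply]
          rcases eq_or_ne i j with rfl | hij
          · simp [Nat.add_comm]
          · rw [if_neg hij, if_neg (Ne.symm hij)]
            omega
        rw [h4]
        omega
      rw [hvec]
    rw [← heq, ← hcsum]
    exact CoverAux.prod_pow_mem_pow _ _ _ _ fun k _ => hgen k
  -- (b) u ∉ J ^ t
  have hnotmem : u ∉ J ^ t := by
    intro hmem
    have h1 := CoverAux.pow_le_monomial_span t J (CoverAux.cover_le_monomial_span hn) hmem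
    rw [mem_ideal_span_monomial_image] at h1
    have hsupp : a ∈ u.support := by
      rw [hu, show ((monomial a) (1:K)).support = {a} by
        rw [support_monomial, if_neg one_ne_zero]]
      exact Finset.mem_singleton_self a
    obtain ⟨d, ⟨c, hcsum, rfl⟩, hle⟩ := h1 a hsupp
    have key : ∀ j : Fin n, t ≤ a j + c j := by
      intro j
      have h2 := Finsupp.le_def.mp hle j
      rw [CoverAux.sum_smul_mdeg_apply] at h2
      have h3 : (∑ k ∈ Finset.univ.erase j, c k) + c j = t := by
        rw [Finset.sum_erase_add _ _ (Finset.mem_univ j), hcsum]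
      omega
    have h4 : (∑ _j : Fin n, t) ≤ ∑ j, (a j + c j) :=
      Finset.sum_le_sum fun j _ => key j
    rw [Finset.sum_const, Finset.card_univ, Fintype.card_fin, smul_eq_mul,
      Finset.sum_add_distrib, ha_sum, hcsum] at h4
    have h5 := CoverAux.key_arith n t hn ht
    omega
  -- assembly
  refine ⟨CoverAux.span_range_X_isMaximal.isPrime, ⟨Ideal.Quotient.mk (J ^ t) u, ?_⟩⟩
  have hle : Ideal.span (Set.range (X : Fin n → MvPolynomial (Fin n) K))
      ≤ (Submodule.span (MvPolynomial (Fin n) K)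
          {Ideal.Quotient.mk (J ^ t) u}).annihilator := by
    rw [Ideal.span_le]
    rintro x ⟨i, rfl⟩
    rw [SetLike.mem_coe, Submodule.mem_annihilator_span_singleton]
    have : (X i : MvPolynomial (Fin n) K) • Ideal.Quotient.mk (J ^ t) u
        = Ideal.Quotient.mk (J ^ t) (X i * u) := rfl
    rw [this, Ideal.Quotient.eq_zero_iff_mem]
    exact hmul i
  have hne : (Submodule.span (MvPolynomial (Fin n) K)
      {Ideal.Quotient.mk (J ^ t) u}).annihilator ≠ ⊤ := by
    intro h
    have h1 : (1 : MvPolynomial (Fin n) K) ∈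
        (Submodule.span (MvPolynomial (Fin n) K)
          {Ideal.Quotient.mk (J ^ t) u}).annihilator := h ▸ Submodule.mem_top
    rw [Submodule.mem_annihilator_span_singleton, one_smul,
      Ideal.Quotient.eq_zero_iff_mem] at h1
    exact hnotmem h1
  have hann := CoverAux.span_range_X_isMaximal.eq_of_le hne hle
  rw [Submodule.bot_colon', ← hann]
  exact CoverAux.span_range_X_isMaximal.isPrime.radical.symm
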